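/- Let G be a simple graph on n vertices with a partition (V_1, …, V_k) of its vertex set, and let H be the graph obtained from G as follows: add all edges inside each V_i (turning each V_i into a clique); for each i, add two new vertices x_i and y_i, each adjacent exactly to all vertices of V_i; and add a new vertex z adjacent exactly to all vertices of V(G). If H contains a set F of at least 3k + 1 vertices such that H[F] is acyclic (equivalently, H has a feedback vertex set of size at most n − k), then G contains an independent set with exactly one vertex from each V_i. -/
import Mathlib


/-- The graph `H` built from `G` with vertex partition `P : Fin k → Set V`: each part `P i` is
turned into a clique, two new vertices `x_i = Sum.inr (Sum.inl (i, false))` and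
`y_i = Sum.inr (Sum.inl (i, true))` are each adjacent exactly to the vertices of `P i`, and a
new vertex `z = Sum.inr (Sum.inr ())` is adjacent exactly to all vertices of `G`. -/
def Hgraph {V : Type*} (G : SimpleGraph V) {k : ℕ} (P : Fin k → Set V) :
    SimpleGraph (V ⊕ ((Fin k × Bool) ⊕ Unit)) :=
  SimpleGraph.fromRel fun a b =>
    match a, b with
    | Sum.inl u, Sum.inl v => G.Adj u v ∨ ∃ i, u ∈ P i ∧ v ∈ P i
    | Sum.inl u, Sum.inr (Sum.inl (i, _)) => u ∈ P i
    | Sum.inl _, Sum.inr (Sum.inr _) => True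
    | _, _ => False

lemma acyclic_no_triangle {W : Type*} {H : SimpleGraph W} (h : H.IsAcyclic) {a b c : W}
    (hab : H.Adj a b) (hbc : H.Adj b c) (hca : H.Adj c a) : False := by
  rw [SimpleGraph.isAcyclic_iff_path_unique] at h
  have := congrArg (fun p : H.Path a b => p.1.length)
    (h (SimpleGraph.Path.singleton hab)
      ⟨SimpleGraph.Walk.cons hca.symm (SimpleGraph.Walk.cons hbc.symm SimpleGraph.Walk.nil), by
        simp [SimpleGraph.Walk.isPath_def, hca.ne', hab.ne, hbc.ne']⟩)
  simp [SimpleGraph.Path.singleton] at this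

section Adj
variable {V : Type*} {G : SimpleGraph V} {k : ℕ} {P : Fin k → Set V}

lemma Hadj_clique {i : Fin k} {u v : V} (hu : u ∈ P i) (hv : v ∈ P i) (hne : u ≠ v) :
    (Hgraph G P).Adj (Sum.inl u) (Sum.inl v) := by
  rw [Hgraph, SimpleGraph.fromRel_adj]
  exact ⟨by simpa using hne, Or.inl (Or.inr ⟨i, hu, hv⟩)⟩

lemma Hadj_G {u v : V} (h : G.Adj u v) : (Hgraph G P).Adj (Sum.inl u) (Sum.inl v) := by
  rw [Hgraph, SimpleGraph.fromRel_adj]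
  exact ⟨by simpa using h.ne, Or.inl (Or.inl h)⟩

lemma Hadj_x {i : Fin k} {u : V} {b : Bool} (hu : u ∈ P i) :
    (Hgraph G P).Adj (Sum.inl u) (Sum.inr (Sum.inl (i, b))) := by
  rw [Hgraph, SimpleGraph.fromRel_adj]
  exact ⟨by simp, Or.inl hu⟩

lemma Hadj_z {u : V} : (Hgraph G P).Adj (Sum.inl u) (Sum.inr (Sum.inr ())) := by
  rw [Hgraph, SimpleGraph.fromRel_adj]
  exact ⟨by simp, Or.inl trivial⟩

end Adj


/-- If `H` (built from `G` with vertex partition `(P 1, …, P k)`) contains a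
set `F` of at least `3k + 1` vertices inducing an acyclic subgraph, then `G` contains an
independent set with exactly one vertex from each part `P i`. -/
theorem stmt11 {V : Type*} [Fintype V] (G : SimpleGraph V) {k : ℕ} (P : Fin k → Set V)
    (hcov : (⋃ i, P i) = Set.univ)
    (hdisj : ∀ i j, i ≠ j → Disjoint (P i) (P j))
    (F : Set (V ⊕ ((Fin k × Bool) ⊕ Unit)))
    (hcard : 3 * k + 1 ≤ F.ncard)
    (hacyc : ((Hgraph G P).induce F).IsAcyclic) :
    ∃ I : Set V, (I.Pairwise fun u v => ¬ G.Adj u v) ∧ ∀ i, ∃! v, v ∈ I ∧ v ∈ P i := by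
  classical
  have hex : ∀ v : V, ∃ i, v ∈ P i := fun v => Set.mem_iUnion.mp (hcov ▸ Set.mem_univ v)
  choose idx hidx using hex
  -- triangles inside F are impossible
  have tri : ∀ {a b c : V ⊕ ((Fin k × Bool) ⊕ Unit)}, a ∈ F → b ∈ F → c ∈ F →
      (Hgraph G P).Adj a b → (Hgraph G P).Adj b c → (Hgraph G P).Adj c a → False := by
    intro a b c ha hb hc hab hbc hca
    exact acyclic_no_triangle hacyc
      (a := ⟨a, ha⟩) (b := ⟨b, hb⟩) (c := ⟨c, hc⟩)
      (by simpa using hab) (by simpa using hbc) (by simpa using hca)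
  -- fiber map
  let g : V ⊕ ((Fin k × Bool) ⊕ Unit) → Option (Fin k) := fun w =>
    match w with
    | Sum.inl v => some (idx v)
    | Sum.inr (Sum.inl (i, _)) => some i
    | Sum.inr (Sum.inr _) => none
  have hFfin : F.Finite := Set.toFinite F
  set FF : Finset (V ⊕ ((Fin k × Bool) ⊕ Unit)) := hFfin.toFinset with hFFdef
  have hmem : ∀ w, w ∈ FF ↔ w ∈ F := fun w => hFfin.mem_toFinset
  have hcardF : F.ncard = FF.card := Set.ncard_eq_toFinset_card F hFfin
  have hsum : FF.card = ∑ j : Option (Fin k), (FF.filter fun w => g w = j).card :=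
    Finset.card_eq_sum_card_fiberwise (fun x _ => Finset.mem_univ _)
  rw [Fintype.sum_option] at hsum
  -- the none-fiber
  have hnone : (FF.filter fun w => g w = none) ⊆ {Sum.inr (Sum.inr ())} := by
    intro w hw
    simp only [Finset.mem_filter] at hw
    rcases w with v | (⟨i, b⟩ | u)
    · simp [g] at hw
    · simp [g] at hw
    · simp
  -- characterize the some-fibers
  have hfib : ∀ (i : Fin k) w, w ∈ FF.filter (fun w => g w = some i) →
      (∃ t, t ∈ P i ∧ Sum.inl t ∈ F ∧ w = Sum.inl t) ∨
      (∃ b, Sum.inr (Sum.inl (i, b)) ∈ F ∧ w = Sum.inr (Sum.inl (i, b))) := by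
    intro i w hw
    simp only [Finset.mem_filter, hmem] at hw
    obtain ⟨hwF, hg⟩ := hw
    rcases w with v | (⟨j, b⟩ | u)
    · left
      have hj : idx v = i := by simpa [g] using hg
      exact ⟨v, hj ▸ hidx v, hwF, rfl⟩
    · right
      have hj : j = i := by simpa [g] using hg
      subst hj
      exact ⟨b, hwF, rfl⟩
    · simp [g] at hg
  -- main per-fiber claim
  have claim : ∀ i : Fin k,
      ((∃ v, v ∈ P i ∧ Sum.inl v ∈ F ∧ ∀ w, w ∈ P i → Sum.inl w ∈ F → w = v) ∧
        (FF.filter fun w => g w = some i).card ≤ 3) ∨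
      (FF.filter fun w => g w = some i).card ≤ 2 := by
    intro i
    by_cases h2 : ∃ u v, u ∈ P i ∧ v ∈ P i ∧ Sum.inl u ∈ F ∧ Sum.inl v ∈ F ∧ u ≠ v
    · right
      obtain ⟨u, v, hu, hv, huF, hvF, huv⟩ := h2
      have hsub : (FF.filter fun w => g w = some i) ⊆ {Sum.inl u, Sum.inl v} := by
        intro w hw
        rcases hfib i w hw with ⟨t, ht, htF, rfl⟩ | ⟨b, hbF, rfl⟩
        · by_contra hne
          simp only [Finset.mem_insert, Finset.mem_singleton, Sum.inl.injEq, not_or] at hne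
          exact tri htF huF hvF (Hadj_clique ht hu hne.1) (Hadj_clique hu hv huv)
            (Hadj_clique hv ht (Ne.symm hne.2))
        · exact (tri huF hvF hbF (Hadj_clique hu hv huv) (Hadj_x hv) (Hadj_x hu).symm).elim
      calc (FF.filter fun w => g w = some i).card ≤ ({Sum.inl u, Sum.inl v} :
            Finset (V ⊕ ((Fin k × Bool) ⊕ Unit))).card := Finset.card_le_card hsub
        _ ≤ 2 := (Finset.card_insert_le _ _).trans (by simp)
    · push_neg at h2
      by_cases h1 : ∃ v, v ∈ P i ∧ Sum.inl v ∈ F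
      · left
        obtain ⟨v, hv, hvF⟩ := h1
        refine ⟨⟨v, hv, hvF, fun w hw hwF => h2 w v hw hv hwF hvF⟩, ?_⟩
        have hsub : (FF.filter fun w => g w = some i) ⊆
            {Sum.inl v, Sum.inr (Sum.inl (i, false)), Sum.inr (Sum.inl (i, true))} := by
          intro w hw
          rcases hfib i w hw with ⟨t, ht, htF, rfl⟩ | ⟨b, hbF, rfl⟩
          · have : t = v := h2 t v ht hv htF hvF
            simp [this]
          · cases b <;> simp
        calc (FF.filter fun w => g w = some i).card ≤ _ := Finset.card_le_card hsub
          _ ≤ 3 := (Finset.card_insert_le _ _).trans (Nat.add_le_add_right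
              ((Finset.card_insert_le _ _).trans (Nat.add_le_add_right (by simp) 1)) 1)
      · right
        push_neg at h1
        have hsub : (FF.filter fun w => g w = some i) ⊆
            {Sum.inr (Sum.inl (i, false)), Sum.inr (Sum.inl (i, true))} := by
          intro w hw
          rcases hfib i w hw with ⟨t, ht, htF, rfl⟩ | ⟨b, hbF, rfl⟩
          · exact absurd htF (h1 t ht)
          · cases b <;> simp
        calc (FF.filter fun w => g w = some i).card ≤ _ := Finset.card_le_card hsub
          _ ≤ 2 := (Finset.card_insert_le _ _).trans (by simp)
  have hb3 : ∀ i : Fin k, (FF.filter fun w => g w = some i).card ≤ 3 := fun i =>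
    (claim i).elim (fun h => h.2) (fun h => h.trans (by norm_num))
  have hnone1 : (FF.filter fun w => g w = none).card ≤ 1 :=
    (Finset.card_le_card hnone).trans (by simp)
  -- z must be in F
  have hz : Sum.inr (Sum.inr ()) ∈ F := by
    by_contra hz
    have h0 : (FF.filter fun w => g w = none).card = 0 := by
      rw [Finset.card_eq_zero]
      refine Finset.eq_empty_of_forall_notMem fun w hw => ?_
      have := hnone hw
      simp only [Finset.mem_singleton] at this
      subst this
      exact hz ((hmem _).mp (Finset.mem_filter.mp hw).1)
    have hsb : ∑ i : Fin k, (FF.filter fun w => g w = some i).card ≤ k * 3 := by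
      have := Finset.sum_le_card_nsmul Finset.univ
        (fun i => (FF.filter fun w => g w = some i).card) 3 (fun i _ => hb3 i)
      simpa using this
    omega
  -- each part is good
  have hgood : ∀ i : Fin k, ∃ v, v ∈ P i ∧ Sum.inl v ∈ F ∧
      ∀ w, w ∈ P i → Sum.inl w ∈ F → w = v := by
    intro i
    rcases claim i with ⟨h, _⟩ | hle2
    · exact h
    exfalso
    have hk : 0 < k := i.pos
    have hsum2 : ∑ j : Fin k,
        ((FF.filter fun w => g w = some j).card + if j = i then 1 else 0) ≤ k * 3 := by
      refine (Finset.sum_le_card_nsmul _ _ 3 ?_).trans (by simp)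
      intro j _
      rcases eq_or_ne j i with rfl | h
      · simp only [if_pos rfl]
        simp only [if_true]
        omega
      · simp only [if_neg h]
        have := hb3 j
        omega
    have hsum3 : ∑ j : Fin k,
        ((FF.filter fun w => g w = some j).card + if j = i then 1 else 0) =
        (∑ j : Fin k, (FF.filter fun w => g w = some j).card) + 1 := by
      rw [Finset.sum_add_distrib, Finset.sum_ite_eq' Finset.univ i (fun _ => 1)]
      simp
    omega
  choose v hv1 hv2 hv3 using hgood
  refine ⟨Set.range v, ?_, ?_⟩
  · rintro a ⟨i, rfl⟩ b ⟨j, rfl⟩ hne hadj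
    exact tri (hv2 i) (hv2 j) hz (Hadj_G hadj) Hadj_z Hadj_z.symm
  · intro i
    refine ⟨v i, ⟨⟨i, rfl⟩, hv1 i⟩, ?_⟩
    rintro w ⟨⟨j, rfl⟩, hwP⟩
    have hji : j = i := by
      by_contra h
      exact Set.disjoint_left.mp (hdisj j i h) (hv1 j) hwP
    subst hji
    rfl
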